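/- There exists a convex, strictly increasing, piecewise affine function Θ: [0,∞) → (0,∞) such that ∫_1^∞ Θ'(s)/(s Θ(s)) ds = +∞ (where Θ' is the a.e. derivative of Θ) and liminf_{s→∞} Θ(s)/s² < +∞. -/

import Mathlib

open MeasureTheory Real

noncomputable section StmtAux

private def Xs : ℕ → ℝ
  | 0 => 0
  | n + 1 => 2 * Xs n * Real.exp (Xs n) + 1

private lemma Xs_zero : Xs 0 = 0 := rfl
private lemma Xs_succ (n : ℕ) : Xs (n + 1) = 2 * Xs n * Real.exp (Xs n) + 1 := rfl

private lemma Xs_nonneg (n : ℕ) : 0 ≤ Xs n := by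
  induction n with
  | zero => simp [Xs_zero]
  | succ n ih => rw [Xs_succ]; nlinarith [Real.exp_pos (Xs n)]

private lemma Xs_succ_ge (n : ℕ) : Xs n + 1 ≤ Xs (n + 1) := by
  rw [Xs_succ]
  nlinarith [Real.one_le_exp (Xs_nonneg n), Xs_nonneg n]

private lemma Xs_mono : StrictMono Xs :=
  strictMono_nat_of_lt_succ fun n => by linarith [Xs_succ_ge n]

private lemma Xs_le (n : ℕ) : (n : ℝ) ≤ Xs n := by
  induction n with
  | zero => simp [Xs_zero]
  | succ n ih => push_cast; linarith [Xs_succ_ge n]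

private lemma Xs_one : Xs 1 = 1 := by
  rw [Xs_succ, Xs_zero]; simp

private lemma Xs_ge_one {n : ℕ} (hn : 1 ≤ n) : 1 ≤ Xs n :=
  Xs_one ▸ Xs_mono.monotone hn

private def As (n : ℕ) : ℝ := Xs n + Xs (n + 1)
private def Cs (n : ℕ) : ℝ := 1 - Xs n * Xs (n + 1)
private def Ls (n : ℕ) (s : ℝ) : ℝ := As n * s + Cs n

private lemma As_pos (n : ℕ) : 1 ≤ As n := by
  have h1 := Xs_ge_one (n := n + 1) (by omega)
  have := Xs_nonneg n
  unfold As; linarith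

private lemma Ls_left (n : ℕ) : Ls n (Xs n) = Xs n ^ 2 + 1 := by
  unfold Ls As Cs; ring

private lemma Ls_right (n : ℕ) : Ls n (Xs (n + 1)) = Xs (n + 1) ^ 2 + 1 := by
  unfold Ls As Cs; ring

private lemma Ls_step (k : ℕ) (s : ℝ) :
    Ls (k + 1) s - Ls k s = (Xs (k + 2) - Xs k) * (s - Xs (k + 1)) := by
  unfold Ls As Cs; ring

private lemma Ls_mono_right (n k : ℕ) {s : ℝ} (h : Xs (n + k) ≤ s) :
    Ls n s ≤ Ls (n + k) s := by
  induction k with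
  | zero => simp
  | succ k ih =>
    have hle : Xs (n + k + 1) ≤ s := le_trans (Xs_mono.monotone (by omega)) h
    have step := Ls_step (n + k) s
    have h3 : Xs (n + k) ≤ Xs (n + k + 2) := Xs_mono.monotone (by omega)
    have h4 : Ls (n + k) s ≤ Ls (n + k + 1) s := by nlinarith
    have ih' : Ls n s ≤ Ls (n + k) s := ih (le_trans (Xs_mono.monotone (by omega)) h)
    calc Ls n s ≤ Ls (n + k) s := ih'
      _ ≤ Ls (n + k + 1) s := h4
      _ = Ls (n + (k + 1)) s := by ring_nf

private lemma Ls_anti_right (m k : ℕ) {s : ℝ} (h : s ≤ Xs (m + 1)) :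
    Ls (m + k) s ≤ Ls m s := by
  induction k with
  | zero => simp
  | succ k ih =>
    have hge : s ≤ Xs (m + k + 1) := le_trans h (Xs_mono.monotone (by omega))
    have step := Ls_step (m + k) s
    have h3 : Xs (m + k) ≤ Xs (m + k + 2) := Xs_mono.monotone (by omega)
    have h4 : Ls (m + k + 1) s ≤ Ls (m + k) s := by nlinarith
    calc Ls (m + (k + 1)) s = Ls (m + k + 1) s := by ring_nf
      _ ≤ Ls (m + k) s := h4
      _ ≤ Ls m s := ih

private lemma Ls_le_Ls {m : ℕ} {s : ℝ} (h1 : Xs m ≤ s) (h2 : s ≤ Xs (m + 1)) (n : ℕ) :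
    Ls n s ≤ Ls m s := by
  rcases le_total n m with h | h
  · obtain ⟨k, rfl⟩ := Nat.exists_eq_add_of_le h
    exact Ls_mono_right n k h1
  · obtain ⟨k, rfl⟩ := Nat.exists_eq_add_of_le h
    exact Ls_anti_right m k h2

private lemma Xs_exists (s : ℝ) : ∃ n : ℕ, s < Xs (n + 1) := by
  obtain ⟨n, hn⟩ := exists_nat_gt s
  exact ⟨n, hn.trans_le ((Xs_le n).trans (Xs_mono.monotone (Nat.le_succ n)))⟩

open Classical in
private def Nn (s : ℝ) : ℕ := Nat.find (Xs_exists s)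

private lemma Nn_lt (s : ℝ) : s < Xs (Nn s + 1) := Nat.find_spec (Xs_exists s)

private lemma Nn_le {s : ℝ} (hs : 0 ≤ s) : Xs (Nn s) ≤ s := by
  rcases h : Nn s with _ | m
  · rw [Xs_zero]; exact hs
  · have hm : m < Nn s := by omega
    have := Nat.find_min (Xs_exists s) hm
    push_neg at this
    exact this

private def Th (s : ℝ) : ℝ := Ls (Nn s) s
private def Th' (s : ℝ) : ℝ := As (Nn s)

private lemma Th_eq {n : ℕ} {s : ℝ} (h1 : Xs n ≤ s) (h2 : s ≤ Xs (n + 1)) : Th s = Ls n s := by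
  apply le_antisymm (Ls_le_Ls h1 h2 (Nn s))
  have hs : 0 ≤ s := le_trans (Xs_nonneg n) h1
  exact Ls_le_Ls (Nn_le hs) (Nn_lt s).le n

private lemma Th_ge {s : ℝ} (hs : 0 ≤ s) (n : ℕ) : Ls n s ≤ Th s :=
  Ls_le_Ls (Nn_le hs) (Nn_lt s).le n

private lemma Th_pos {s : ℝ} (hs : 0 ≤ s) : 1 ≤ Th s := by
  have h1 := Nn_le hs
  have h2 := As_pos (Nn s)
  have h3 := Ls_left (Nn s)
  have h4 := sq_nonneg (Xs (Nn s))
  have : Ls (Nn s) (Xs (Nn s)) ≤ Ls (Nn s) s := by unfold Ls; nlinarith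
  unfold Th; nlinarith

private lemma Nn_le_of {n : ℕ} {s : ℝ} (h2 : s < Xs (n + 1)) : Nn s ≤ n := by
  unfold Nn; exact Nat.find_le h2

private lemma Nn_unique {n : ℕ} {s : ℝ} (h1 : Xs n ≤ s) (h2 : s < Xs (n + 1)) : Nn s = n := by
  apply le_antisymm (Nn_le_of h2)
  by_contra h
  push_neg at h
  have : Xs (Nn s + 1) ≤ Xs n := Xs_mono.monotone (by omega)
  exact absurd ((Nn_lt s).trans_le this) (not_lt.mpr h1)

end StmtAux

open MeasureTheory

theorem stmt_7 :
    ∃ Θ Θ' : ℝ → ℝ,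
      ConvexOn ℝ (Set.Ici 0) Θ ∧
      StrictMonoOn Θ (Set.Ici 0) ∧
      (∀ s : ℝ, 0 ≤ s → 0 < Θ s) ∧
      (∃ x : ℕ → ℝ, x 0 = 0 ∧ StrictMono x ∧ Filter.Tendsto x Filter.atTop Filter.atTop ∧
        ∀ k : ℕ, ∃ a c : ℝ, ∀ s ∈ Set.Icc (x k) (x (k + 1)), Θ s = a * s + c) ∧
      (∀ᵐ s ∂(volume.restrict (Set.Ici (0:ℝ))), HasDerivWithinAt Θ (Θ' s) (Set.Ici 0) s) ∧
      (∫⁻ s in Set.Ioi (1:ℝ), ENNReal.ofReal (Θ' s / (s * Θ s)) = ⊤) ∧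
      (∃ M : ℝ, ∃ᶠ s in Filter.atTop, Θ s / s ^ 2 ≤ M) := by
  refine ⟨Th, Th', ?_, ?_, ?_, ?_, ?_, ?_, ?_⟩
  · -- convexity
    refine ⟨convex_Ici 0, ?_⟩
    intro x hx y hy t u ht hu htu
    simp only [smul_eq_mul]
    set z := t * x + u * y with hz
    set m := Nn z with hm
    have e1 : Th z = t * Ls m x + u * Ls m y := by
      show Ls m z = _
      unfold Ls
      linear_combination Cs m * htu.symm
    rw [e1]
    exact add_le_add (mul_le_mul_of_nonneg_left (Th_ge hx m) ht)
      (mul_le_mul_of_nonneg_left (Th_ge hy m) hu)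
  · -- strict mono
    intro s hs t ht hst
    have h1 : Ls (Nn s) s < Ls (Nn s) t := by
      have := As_pos (Nn s); unfold Ls; nlinarith
    exact lt_of_lt_of_le h1 (Th_ge ht (Nn s))
  · -- positivity
    intro s hs; linarith [Th_pos hs]
  · -- piecewise affine
    refine ⟨Xs, Xs_zero, Xs_mono, ?_, ?_⟩
    · exact Filter.tendsto_atTop_mono Xs_le tendsto_natCast_atTop_atTop
    · intro k
      exact ⟨As k, Cs k, fun s hs => Th_eq hs.1 hs.2⟩
  · -- derivative a.e.
    have h0 : ∀ᵐ s ∂(volume.restrict (Set.Ici (0:ℝ))), s ∉ Set.range Xs := by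
      refine ae_restrict_of_ae ?_
      have : volume (Set.range Xs) = 0 := (Set.countable_range Xs).measure_zero _
      exact (measure_eq_zero_iff_ae_notMem).mp this
    filter_upwards [h0, ae_restrict_mem measurableSet_Ici] with s hs hs0
    have hlt : Xs (Nn s) < s :=
      lt_of_le_of_ne (Nn_le hs0) (fun h => hs ⟨Nn s, h⟩)
    have hmem : s ∈ Set.Ioo (Xs (Nn s)) (Xs (Nn s + 1)) := ⟨hlt, Nn_lt s⟩
    have hnhds : Set.Ioo (Xs (Nn s)) (Xs (Nn s + 1)) ∈ nhds s :=
      isOpen_Ioo.mem_nhds hmem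
    have hEq : Th =ᶠ[nhds s] Ls (Nn s) := by
      filter_upwards [hnhds] with u hu
      exact Th_eq hu.1.le hu.2.le
    have hd : HasDerivAt (Ls (Nn s)) (As (Nn s)) s := by
      have : HasDerivAt (fun u => As (Nn s) * u + Cs (Nn s)) (As (Nn s) * 1) s :=
        ((hasDerivAt_id s).const_mul (As (Nn s))).add_const (Cs (Nn s))
      simp only [mul_one] at this; exact this
    exact ((hd.congr_of_eventuallyEq hEq).hasDerivWithinAt)
  · -- divergent integral
    have key : ∀ n : ℕ, 1 ≤ n →
        (1 : ENNReal) ≤ ∫⁻ s in Set.Ioo (Xs n) (Xs (n + 1)),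
          ENNReal.ofReal (Th' s / (s * Th s)) := by
      intro n hn
      set a := Xs n with ha
      set b := Xs (n + 1) with hb
      have ha1 : 1 ≤ a := Xs_ge_one hn
      have hab : a + 1 ≤ b := Xs_succ_ge n
      have hbpos : (0:ℝ) < b := by linarith
      have hD : (1:ℝ) ≤ a * b - 1 := by nlinarith
      set D : ℝ := a * b - 1 with hDdef
      have hCD : Cs n = -D := by unfold Cs; rw [hDdef]; ring
      have hApos : (1:ℝ) ≤ As n := As_pos n
      -- positivity of the line on [a, b]
      have hLpos : ∀ s : ℝ, a ≤ s → (1:ℝ) ≤ Ls n s := by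
        intro s hs
        have := Ls_left n
        unfold Ls at this ⊢
        nlinarith
      -- congruence on the open interval
      have hcongr : ∫⁻ s in Set.Ioo (Xs n) (Xs (n + 1)),
            ENNReal.ofReal (Th' s / (s * Th s))
          = ∫⁻ s in Set.Ioo (Xs n) (Xs (n + 1)),
            ENNReal.ofReal (As n / (s * Ls n s)) := by
        apply setLIntegral_congr_fun measurableSet_Ioo
        intro s hs
        dsimp only
        have hNs : Nn s = n := Nn_unique hs.1.le hs.2
        rw [show Th' s = As n by unfold Th'; rw [hNs],
          show Th s = Ls n s by unfold Th; rw [hNs]]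
      rw [hcongr]
      -- the real integral via FTC
      set g : ℝ → ℝ := fun s => As n / (s * Ls n s) with hg
      set F : ℝ → ℝ := fun s => (As n / D) * Real.log (Ls n s / s) with hF
      have huIcc : Set.uIcc a b = Set.Icc a b := Set.uIcc_of_le (by linarith)
      have hderiv : ∀ s ∈ Set.uIcc a b, HasDerivAt F (g s) s := by
        intro s hs
        rw [huIcc] at hs
        have hs1 : 1 ≤ s := le_trans ha1 hs.1
        have hs0 : s ≠ 0 := by linarith
        have hL1 : 1 ≤ Ls n s := hLpos s hs.1
        have hLne : Ls n s ≠ 0 := by linarith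
        have hdL : HasDerivAt (fun u => Ls n u) (As n) s := by
          have : HasDerivAt (fun u => As n * u + Cs n) (As n * 1) s :=
            ((hasDerivAt_id s).const_mul (As n)).add_const (Cs n)
          simpa [Ls] using this
        have hq : HasDerivAt (fun u => Ls n u / u)
            ((As n * s - Ls n s * 1) / s ^ 2) s := hdL.div (hasDerivAt_id s) hs0
        have hnum : As n * s - Ls n s * 1 = D := by
          unfold Ls; rw [hCD]; ring
        rw [hnum] at hq
        have hratio : Ls n s / s ≠ 0 := div_ne_zero hLne hs0
        have hlog := hq.log hratio
        have := hlog.const_mul (As n / D)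
        refine this.congr_deriv ?_
        rw [hg]
        field_simp
      have hgcont : ContinuousOn g (Set.uIcc a b) := by
        rw [huIcc]
        apply ContinuousOn.div continuousOn_const
        · exact (continuousOn_id.mul ((continuousOn_const.mul continuousOn_id).add
            continuousOn_const))
        · intro s hs
          have hs1 : 1 ≤ s := le_trans ha1 hs.1
          have hL1 : 1 ≤ Ls n s := hLpos s hs.1
          unfold Ls
          positivity
      have hInt : IntervalIntegrable g volume a b := hgcont.intervalIntegrable
      have hFTC : ∫ s in a..b, g s = F b - F a :=
        intervalIntegral.integral_eq_sub_of_hasDerivAt hderiv hInt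
      -- lower bound on F b - F a
      have hLa : Ls n a = a ^ 2 + 1 := Ls_left n
      have hLb : Ls n b = b ^ 2 + 1 := Ls_right n
      have hlogdiff : a ≤ Real.log (Ls n b / b) - Real.log (Ls n a / a) := by
        rw [hLa, hLb]
        have h1 : (0:ℝ) < (b ^ 2 + 1) / b := by positivity
        have h2 : (0:ℝ) < (a ^ 2 + 1) / a := by positivity
        rw [← Real.log_div (ne_of_gt h1) (ne_of_gt h2)]
        rw [Real.le_log_iff_exp_le (by positivity)]
        have hbe : b = 2 * a * Real.exp a + 1 := by rw [hb, ha]; rfl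
        have he1 : 1 ≤ Real.exp a := Real.one_le_exp (by linarith)
        have he0 : (0:ℝ) < Real.exp a := Real.exp_pos a
        have hrw : (b ^ 2 + 1) / b / ((a ^ 2 + 1) / a) = ((b ^ 2 + 1) * a) / ((a ^ 2 + 1) * b) := by
          field_simp
        rw [hrw, le_div_iff₀ (by positivity)]
        have key : (b ^ 2 + 1) * a - Real.exp a * ((a ^ 2 + 1) * b)
            = 2 * a * Real.exp a ^ 2 * (a ^ 2 - 1) + Real.exp a * (3 * a ^ 2 - 1) + 2 * a := by
          rw [hbe]; ring
        have k1 : (0:ℝ) ≤ 2 * a * Real.exp a ^ 2 * (a ^ 2 - 1) := by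
          apply mul_nonneg (by positivity)
          nlinarith
        have k2 : (0:ℝ) ≤ Real.exp a * (3 * a ^ 2 - 1) := by
          apply mul_nonneg (by positivity)
          nlinarith
        linarith
      have hAD : 1 / a ≤ As n / D := by
        rw [div_le_div_iff₀ (by linarith) (by linarith)]
        have : b ≤ As n := by unfold As; rw [← ha, ← hb]; linarith [Xs_nonneg n]
        nlinarith
      have hmain : (1:ℝ) ≤ F b - F a := by
        have e : F b - F a = (As n / D) * (Real.log (Ls n b / b) - Real.log (Ls n a / a)) := by
          rw [hF]; ring
        rw [e]
        calc (1:ℝ) = (1 / a) * a := by field_simp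
          _ ≤ (As n / D) * (Real.log (Ls n b / b) - Real.log (Ls n a / a)) :=
            mul_le_mul hAD hlogdiff (by linarith) (by positivity)
      -- convert to lintegral
      have hgnn : 0 ≤ᵐ[volume.restrict (Set.Ioo a b)] g := by
        filter_upwards [ae_restrict_mem measurableSet_Ioo] with s hs
        have hs1 : 1 ≤ s := le_trans ha1 hs.1.le
        have hL1 : 1 ≤ Ls n s := hLpos s hs.1.le
        rw [hg]
        positivity
      have hgint : IntegrableOn g (Set.Ioo a b) volume := by
        have h2c : ContinuousOn g (Set.Icc a b) := huIcc ▸ hgcont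
        have h3 : IntegrableOn g (Set.Icc a b) volume := h2c.integrableOn_Icc
        exact h3.mono_set Set.Ioo_subset_Icc_self
      have heq2 : ∫ s in Set.Ioo a b, g s = F b - F a := by
        rw [← MeasureTheory.integral_Ioc_eq_integral_Ioo,
          ← intervalIntegral.integral_of_le (by linarith : a ≤ b)]
        exact hFTC
      calc (1 : ENNReal) = ENNReal.ofReal 1 := by simp
        _ ≤ ENNReal.ofReal (∫ s in Set.Ioo a b, g s) := by
            rw [heq2]; exact ENNReal.ofReal_le_ofReal hmain
        _ = ∫⁻ s in Set.Ioo a b, ENNReal.ofReal (g s) :=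
            ofReal_integral_eq_lintegral_ofReal hgint hgnn
        _ = ∫⁻ s in Set.Ioo (Xs n) (Xs (n+1)), ENNReal.ofReal (As n / (s * Ls n s)) := by
            rw [hg, ← ha, ← hb]
    -- sum up
    have hdisj : Pairwise (Function.onFun Disjoint
        (fun k : ℕ => Set.Ioo (Xs (k + 1)) (Xs (k + 2)))) := by
      intro m k hmk
      rcases hmk.lt_or_gt with h | h
      · apply Set.disjoint_left.mpr
        intro s hs1 hs2
        have : Xs (m + 2) ≤ Xs (k + 1) := Xs_mono.monotone (by omega)
        linarith [hs1.2, hs2.1]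
      · apply Set.disjoint_left.mpr
        intro s hs1 hs2
        have : Xs (k + 2) ≤ Xs (m + 1) := Xs_mono.monotone (by omega)
        linarith [hs1.1, hs2.2]
    have hsub : (⋃ k : ℕ, Set.Ioo (Xs (k + 1)) (Xs (k + 2))) ⊆ Set.Ioi (1:ℝ) := by
      intro s hs
      obtain ⟨k, hk⟩ := Set.mem_iUnion.mp hs
      have : (1:ℝ) ≤ Xs (k + 1) := Xs_ge_one (by omega)
      exact lt_of_le_of_lt this hk.1
    apply top_le_iff.mp
    calc (⊤ : ENNReal) = ∑' _ : ℕ, (1 : ENNReal) :=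
          (ENNReal.tsum_const_eq_top_of_ne_zero one_ne_zero).symm
      _ ≤ ∑' k : ℕ, ∫⁻ s in Set.Ioo (Xs (k + 1)) (Xs (k + 2)),
            ENNReal.ofReal (Th' s / (s * Th s)) :=
          ENNReal.tsum_le_tsum (fun k => key (k + 1) (by omega))
      _ = ∫⁻ s in ⋃ k : ℕ, Set.Ioo (Xs (k + 1)) (Xs (k + 2)),
            ENNReal.ofReal (Th' s / (s * Th s)) :=
          (lintegral_iUnion (fun k => measurableSet_Ioo) hdisj _).symm
      _ ≤ ∫⁻ s in Set.Ioi (1:ℝ), ENNReal.ofReal (Th' s / (s * Th s)) :=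
          lintegral_mono_set hsub
  · -- frequently bounded by s^2
    refine ⟨2, Filter.frequently_atTop.mpr (fun r => ?_)⟩
    obtain ⟨n, hn⟩ := exists_nat_gt r
    have hn1 : (1:ℝ) ≤ Xs (n + 1) := Xs_ge_one (by omega)
    have hrx : r ≤ Xs (n + 1) := by
      have h := Xs_le (n + 1)
      push_cast at h
      linarith
    refine ⟨Xs (n + 1), hrx, ?_⟩
    have hTv : Th (Xs (n + 1)) = Xs (n + 1) ^ 2 + 1 := by
      rw [Th_eq (le_refl (Xs (n + 1))) (Xs_mono.monotone (Nat.le_succ (n + 1))), Ls_left]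
    rw [hTv, div_le_iff₀ (by positivity)]
    nlinarith
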